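/- Let G be a finite group of even order admitting a 1-rotational k-factorization F of the complete graph on G ∪ {∞}. Then k is even, and every involution of G lies in the G-stabilizer of some factor F ∈ F. -/

import Mathlib

open SimpleGraph

/-- The image of a graph on `G ∪ {∞}` under right multiplication by `g` (with `∞ g = ∞`). -/
def shiftG {G : Type*} [Group G] (F : SimpleGraph (Option G)) (g : G) :
    SimpleGraph (Option G) :=
  F.map (Equiv.optionCongr (Equiv.mulRight g)).toEmbedding

/-- The `G`-stabilizer of a graph on `G ∪ {∞}`. -/
def stabG {G : Type*} [Group G] (F : SimpleGraph (Option G)) : Set G :=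
  {g | shiftG F g = F}

/-- A `k`-factor: a spanning `k`-regular subgraph of the complete graph. -/
def IsKFactor {V : Type*} (k : ℕ) (F : SimpleGraph V) : Prop :=
  ∀ v : V, (F.neighborSet v).ncard = k

/-- A `k`-factorization: a set of `k`-factors whose edges partition the complete graph. -/
def IsKFactorization {V : Type*} (k : ℕ) (𝓕 : Set (SimpleGraph V)) : Prop :=
  (∀ F ∈ 𝓕, IsKFactor k F) ∧
  ∀ u v : V, u ≠ v → ∃! F, F ∈ 𝓕 ∧ F.Adj u v

/-- A family of graphs on `G ∪ {∞}` is `1`-rotational if it is closed under the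
right multiplication action of `G`. -/
def IsRotational {G : Type*} [Group G] (𝓕 : Set (SimpleGraph (Option G))) : Prop :=
  ∀ F ∈ 𝓕, ∀ g : G, shiftG F g ∈ 𝓕

theorem stmt1 {G : Type*} [Group G] [Fintype G] (k : ℕ)
    (hG : Even (Fintype.card G))
    (𝓕 : Set (SimpleGraph (Option G)))
    (hfac : IsKFactorization k 𝓕) (hrot : IsRotational 𝓕) :
    Even k ∧ ∀ x : G, orderOf x = 2 → ∃ F ∈ 𝓕, x ∈ stabG F := by
  classical
  constructor
  · -- k is even by a handshake argument on any one factor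
    obtain ⟨F, ⟨hF, -⟩, -⟩ := hfac.2 (some 1) none (by simp)
    have hreg := hfac.1 F hF
    have hdeg : ∀ v : Option G, F.degree v = k := by
      intro v
      have h := hreg v
      simp only [← SimpleGraph.card_neighborFinset_eq_degree, SimpleGraph.neighborFinset_def]
      rw [← Set.ncard_eq_toFinset_card']
      exact h
    have hsum : ∑ v : Option G, F.degree v = 2 * F.edgeFinset.card :=
      F.sum_degrees_eq_twice_card_edges
    have hmul : Fintype.card (Option G) * k = 2 * F.edgeFinset.card := by
      rw [← hsum]
      simp [hdeg, Finset.sum_const, Finset.card_univ, mul_comm]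
    have heven : Even (Fintype.card (Option G) * k) := by
      rw [hmul]; exact even_two_mul _
    have hodd : ¬ Even (Fintype.card (Option G)) := by
      rw [Fintype.card_option, Nat.even_add_one]
      simpa using hG
    rcases Nat.even_mul.mp heven with h | h
    · exact absurd h hodd
    · exact h
  · intro x hx
    have hx1 : x ≠ 1 := by
      intro h; rw [h, orderOf_one] at hx; norm_num at hx
    have hxx : x * x = 1 := by
      have := pow_orderOf_eq_one x
      rwa [hx, pow_two] at this
    obtain ⟨F, ⟨hF, hadj⟩, huniq⟩ := hfac.2 (some (1 : G)) (some x)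
      (by simpa using (Ne.symm hx1))
    refine ⟨F, hF, ?_⟩
    have hmem : shiftG F x ∈ 𝓕 := hrot F hF x
    have hadj' : (shiftG F x).Adj (some 1) (some x) := by
      refine ⟨hadj.ne, some x, some 1, hadj.symm, ?_, ?_⟩ <;> simp [hxx]
    exact huniq _ ⟨hmem, hadj'⟩
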